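/- Let τ' > 0, K ∈ {1,…,N}, and let U be a random variable uniformly distributed on the ball {u ∈ ℝ^N : f_d(u) ≤ τ'}. Set M = sup{ f_d(Σ_{i∈I} u_i ψ_i) : |u_i| ≤ 1/2 for all i }. Then, with Cl_K = {u* ∈ ∂C(0) : #J(u*) = K} and D = {τ Σ_{i∈I} k_i ψ_i : (k_i) ∈ ℤ^N}, the probability P( #J̃(U) = K ) satisfies P( #J̃(U) = K ) ≤ (Leb_N(C(0)) / Leb_N({f_d ≤ τ'})) · #( SSAT(Cl_K, (0,+∞)) ∩ {u : f_d(u) ≤ τ' + Mτ} ∩ D ) and P( #J̃(U) = K ) ≥ (Leb_N(C(0)) / Leb_N({f_d ≤ τ'})) · #( SSAT(Cl_K, (0,+∞)) ∩ {u : f_d(u) ≤ τ' − Mτ} ∩ D ), where Leb_N denotes Lebesgue measure on ℝ^N. -/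

import Mathlib

open MeasureTheory Filter Set
open scoped Classical

noncomputable section

/-- The ambient space `ℝ^N` with the Euclidean structure. -/
abbrev Euc (N : ℕ) := EuclideanSpace ℝ (Fin N)

variable {N : ℕ}

/-- The cell `C((k_i))` : points whose coordinates in the basis `ψ` satisfy
`τ(k_i - 1/2) ≤ u_i ≤ τ(k_i + 1/2)`. -/
def cube (ψ : Module.Basis (Fin N) ℝ (Euc N)) (τ : ℝ) (k : Fin N → ℤ) : Set (Euc N) :=
  {u | ∀ i, τ * ((k i : ℝ) - 1/2) ≤ ψ.repr u i ∧ ψ.repr u i ≤ τ * ((k i : ℝ) + 1/2)}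

/-- The central cell `C(0)`. -/
def cube0 (ψ : Module.Basis (Fin N) ℝ (Euc N)) (τ : ℝ) : Set (Euc N) := cube ψ τ 0

/-- The set of active (saturated) coordinates `J(u)` for `u ∈ C(0)`. -/
def Jset (ψ : Module.Basis (Fin N) ℝ (Euc N)) (τ : ℝ) (u : Euc N) : Set (Fin N) :=
  {i | ψ.repr u i = τ / 2 ∨ ψ.repr u i = -(τ / 2)}

/-- `sol` is the solution map of the problems `(P)(u)` : `sol u` minimizes `f(v - u)` over
`C(0)`.  (Under the hypotheses on `f` the minimizer is unique.) -/
def IsSol (ψ : Module.Basis (Fin N) ℝ (Euc N)) (τ : ℝ) (f : Euc N → ℝ) (sol : Euc N → Euc N) : Prop :=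
  ∀ u, sol u ∈ cube0 ψ τ ∧ IsMinOn (fun v => f (v - u)) (cube0 ψ τ) (sol u)

/-- `SSAT(C, A)` : the set of data `u` whose solution `sol u` lies in `C` and with
`f_d(u - sol u) ∈ A`. -/
def SSAT (sol : Euc N → Euc N) (fd : Euc N → ℝ) (C : Set (Euc N)) (A : Set ℝ) : Set (Euc N) :=
  {u | sol u ∈ C ∧ fd (u - sol u) ∈ A}

/-- `f` is a norm. -/
structure IsNormLike (f : Euc N → ℝ) : Prop where
  add_le : ∀ x y, f (x + y) ≤ f x + f y
  smul_eq : ∀ (c : ℝ) (x), f (c • x) = |c| * f x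
  eq_zero_iff : ∀ x, f x = 0 ↔ x = 0

/-- `f` is a norm, continuously differentiable away from `0`, with strictly convex
level sets. -/
structure GoodNorm (f : Euc N → ℝ) : Prop where
  add_le : ∀ x y, f (x + y) ≤ f x + f y
  smul_eq : ∀ (c : ℝ) (x), f (c • x) = |c| * f x
  eq_zero_iff : ∀ x, f x = 0 ↔ x = 0
  smooth : ∀ x : Euc N, x ≠ 0 → ContDiffAt ℝ 1 f x
  sconv : StrictConvex ℝ {x : Euc N | f x ≤ 1}

/-- `f` is curved : the normalized-gradient map `h : {f = 1} → S^{N-1}`,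
`h(u) = ∇f(u)/‖∇f(u)‖₂`, is a bijection whose inverse is Lipschitz. -/
def Curved (f : Euc N → ℝ) : Prop :=
  ∃ (L : NNReal) (g : Euc N → Euc N),
    LipschitzOnWith L g (Metric.sphere (0 : Euc N) 1) ∧
    (∀ u : Euc N, f u = 1 → g (‖gradient f u‖⁻¹ • gradient f u) = u) ∧
    ∀ w ∈ Metric.sphere (0 : Euc N) 1, ∃ u, f u = 1 ∧ ‖gradient f u‖⁻¹ • gradient f u = w

/-- The projection `p` onto `Span(ψ_j : j ∈ J)` along the other basis vectors. -/
def pJ (ψ : Module.Basis (Fin N) ℝ (Euc N)) (J : Set (Fin N)) (x : Euc N) : Euc N :=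
  ∑ j : Fin N, if j ∈ J then ψ.repr x j • ψ j else 0

/-- The "center" `u^c` of the face of `u` : keep the saturated coordinates, zero out
the others. -/
def ucOf (ψ : Module.Basis (Fin N) ℝ (Euc N)) (τ : ℝ) (u : Euc N) : Euc N :=
  pJ ψ (Jset ψ τ u) u

/-- The equivalence class `ū` of `u` in `C(0)` : same active set. -/
def ubar (ψ : Module.Basis (Fin N) ℝ (Euc N)) (τ : ℝ) (u : Euc N) : Set (Euc N) :=
  {w ∈ cube0 ψ τ | Jset ψ τ w = Jset ψ τ u}

/-- The discrete grid `D = τ ℤ^N` (in the basis `ψ`). -/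
def Dgrid (ψ : Module.Basis (Fin N) ℝ (Euc N)) (τ : ℝ) : Set (Euc N) :=
  {x | ∃ k : Fin N → ℤ, x = ∑ i, (τ * (k i : ℝ)) • ψ i}

/-- The slice `Dom((k_j)_{j∈J})` of the grid : grid points whose `J`-coordinates are
the prescribed `τ k_j`. -/
def DomSlice (ψ : Module.Basis (Fin N) ℝ (Euc N)) (τ : ℝ) (J : Set (Fin N)) (k : Fin N → ℤ) :
    Set (Euc N) :=
  {x ∈ Dgrid ψ τ | ∀ j ∈ J, ψ.repr x j = τ * (k j : ℝ)}

/-- The grid `τ ℤ^J` inside `Span(ψ_j : j ∈ J)`. -/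
def JgridJ (ψ : Module.Basis (Fin N) ℝ (Euc N)) (τ : ℝ) (J : Set (Fin N)) : Set (Euc N) :=
  {x | ∃ k : Fin N → ℤ, x = ∑ j : Fin N, if j ∈ J then (τ * (k j : ℝ)) • ψ j else 0}

/-- `Leb_K(S)` : the Lebesgue measure (in `ℝ^{#J}`) of the set of `J`-indexed coordinate
families whose combination lies in `S`. -/
def lebJ (ψ : Module.Basis (Fin N) ℝ (Euc N)) (J : Set (Fin N)) (S : Set (Euc N)) : ENNReal :=
  volume {a : ↥J → ℝ | (∑ j : ↥J, a j • ψ (j : Fin N)) ∈ S}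

/-- The set `C_K` of centers of the faces of codimension `K`. -/
def CKset (ψ : Module.Basis (Fin N) ℝ (Euc N)) (τ : ℝ) (K : ℕ) : Set (Euc N) :=
  {x | ∃ (J : Set (Fin N)) (ε : Fin N → ℝ), J.ncard = K ∧ (∀ j ∈ J, ε j = 1 ∨ ε j = -1) ∧
    x = ∑ j : Fin N, if j ∈ J then (ε j * (τ / 2)) • ψ j else 0}

/-- The set `Cl_K` of boundary points of `C(0)` with exactly `K` active constraints. -/
def ClKset (ψ : Module.Basis (Fin N) ℝ (Euc N)) (τ : ℝ) (K : ℕ) : Set (Euc N) :=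
  {u | u ∈ frontier (cube0 ψ τ) ∧ (Jset ψ τ u).ncard = K}

/-- `k_i(u)` : the unique integer with `τ(k_i - 1/2) ≤ u_i < τ(k_i + 1/2)`. -/
def kfun (ψ : Module.Basis (Fin N) ℝ (Euc N)) (τ : ℝ) (u : Euc N) (i : Fin N) : ℤ :=
  ⌊ψ.repr u i / τ + 1 / 2⌋

/-- The grid point `τ Σ k_i(u) ψ_i` approximating `u`. -/
def gridpt (ψ : Module.Basis (Fin N) ℝ (Euc N)) (τ : ℝ) (u : Euc N) : Euc N :=
  ∑ i, (τ * (kfun ψ τ u i : ℝ)) • ψ i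

/-- `J̃(u)` : the active set of the solution of `(P)` at the grid point of `u`. -/
def Jtil (ψ : Module.Basis (Fin N) ℝ (Euc N)) (τ : ℝ) (sol : Euc N → Euc N) (u : Euc N) :
    Set (Fin N) :=
  Jset ψ τ (sol (gridpt ψ τ u))

section AuxStmt17

variable {N : ℕ}

namespace IsNormLike

variable {fd : Euc N → ℝ}

lemma zero (hfd : IsNormLike fd) : fd 0 = 0 := by
  have := hfd.smul_eq 0 0; simpa using this

lemma neg (hfd : IsNormLike fd) (x : Euc N) : fd (-x) = fd x := by
  have := hfd.smul_eq (-1) x; simpa using this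

lemma nonneg (hfd : IsNormLike fd) (x : Euc N) : 0 ≤ fd x := by
  have h1 := hfd.add_le x (-x)
  have h2 := hfd.neg x
  have h3 : x + -x = 0 := add_neg_cancel x
  rw [h3, hfd.zero] at h1
  linarith

lemma sub_le (hfd : IsNormLike fd) (x y : Euc N) : fd x ≤ fd y + fd (x - y) := by
  have := hfd.add_le y (x - y)
  simpa using this

lemma sum_le (hfd : IsNormLike fd) {α : Type*} (s : Finset α) (g : α → Euc N) :
    fd (∑ a ∈ s, g a) ≤ ∑ a ∈ s, fd (g a) := by
  classical
  induction s using Finset.induction with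
  | empty => simp [hfd.zero]
  | insert _ _ h ih =>
      rw [Finset.sum_insert h, Finset.sum_insert h]
      exact le_trans (hfd.add_le _ _) (by linarith)

end IsNormLike

variable {fd : Euc N → ℝ}

lemma reprCont (ψ : Module.Basis (Fin N) ℝ (Euc N)) (i : Fin N) :
    Continuous fun u : Euc N => ψ.repr u i := by
  have h := LinearMap.continuous_of_finiteDimensional (ψ.coord i)
  refine h.congr fun u => ?_
  rw [Module.Basis.coord_apply]

lemma fd_le_norm (ψ : Module.Basis (Fin N) ℝ (Euc N)) (hfd : IsNormLike fd) :
    ∃ C : ℝ, 0 ≤ C ∧ ∀ x, fd x ≤ C * ‖x‖ := by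
  classical
  set φ : Fin N → Euc N →L[ℝ] ℝ :=
    fun i => LinearMap.toContinuousLinearMap (ψ.coord i) with hφ
  refine ⟨∑ i, ‖φ i‖ * fd (ψ i),
    Finset.sum_nonneg fun i _ => mul_nonneg (norm_nonneg _) (hfd.nonneg _), fun x => ?_⟩
  have h1 : fd x = fd (∑ i, ψ.repr x i • ψ i) := by rw [ψ.sum_repr]
  have h2 : fd (∑ i, ψ.repr x i • ψ i) ≤ ∑ i, fd (ψ.repr x i • ψ i) :=
    hfd.sum_le _ _
  have h3 : ∀ i : Fin N, fd (ψ.repr x i • ψ i) ≤ (‖φ i‖ * ‖x‖) * fd (ψ i) := by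
    intro i
    rw [hfd.smul_eq]
    apply mul_le_mul_of_nonneg_right _ (hfd.nonneg _)
    have := (φ i).le_opNorm x
    have hval : φ i x = ψ.repr x i := by simp [hφ, Module.Basis.coord_apply]
    rw [hval] at this
    simpa [Real.norm_eq_abs] using this
  calc fd x = fd (∑ i, ψ.repr x i • ψ i) := h1
    _ ≤ ∑ i, fd (ψ.repr x i • ψ i) := h2
    _ ≤ ∑ i, (‖φ i‖ * ‖x‖) * fd (ψ i) := Finset.sum_le_sum fun i _ => h3 i
    _ = (∑ i, ‖φ i‖ * fd (ψ i)) * ‖x‖ := by rw [Finset.sum_mul]; congr 1; ext i; ring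

lemma fd_cont (ψ : Module.Basis (Fin N) ℝ (Euc N)) (hfd : IsNormLike fd) : Continuous fd := by
  obtain ⟨C, hC0, hC⟩ := fd_le_norm ψ hfd
  have key : ∀ x y : Euc N, fd x - fd y ≤ C * ‖x - y‖ := by
    intro x y
    have h1 := hfd.sub_le x y
    have h2 := hC (x - y)
    linarith
  have : LipschitzWith C.toNNReal fd := by
    apply LipschitzWith.of_dist_le_mul
    intro x y
    rw [Real.dist_eq, dist_eq_norm, abs_sub_le_iff, Real.coe_toNNReal C hC0]
    constructor
    · exact key x y
    · have := key y x
      rw [show y - x = -(x - y) by abel, norm_neg] at this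
      exact this
  exact this.continuous

lemma repr_combo (ψ : Module.Basis (Fin N) ℝ (Euc N)) (c : Fin N → ℝ) (i : Fin N) :
    ψ.repr (∑ j, c j • ψ j) i = c i := by
  classical
  simp [map_sum, _root_.map_smul, Module.Basis.repr_self, Finsupp.single_apply, Finset.sum_apply']

lemma kfun_bounds (ψ : Module.Basis (Fin N) ℝ (Euc N)) (τ : ℝ) (hτ : 0 < τ) (u : Euc N) (i : Fin N) :
    τ * ((kfun ψ τ u i : ℝ) - 1/2) ≤ ψ.repr u i ∧
      ψ.repr u i < τ * ((kfun ψ τ u i : ℝ) + 1/2) := by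
  set r := ψ.repr u i / τ with hrdef
  have hx : ψ.repr u i = r * τ := (div_mul_cancel₀ _ hτ.ne').symm
  have h1 : ((⌊r + 1/2⌋ : ℤ) : ℝ) ≤ r + 1/2 := Int.floor_le _
  have h2 : r + 1/2 < (⌊r + 1/2⌋ : ℤ) + 1 := Int.lt_floor_add_one _
  have hk : kfun ψ τ u i = ⌊r + 1/2⌋ := by simp [kfun, hrdef]
  rw [hk, hx]
  constructor
  · nlinarith
  · nlinarith

lemma kfun_eq (ψ : Module.Basis (Fin N) ℝ (Euc N)) (τ : ℝ) (hτ : 0 < τ) {u : Euc N} {i : Fin N} {k : ℤ}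
    (h1 : τ * ((k : ℝ) - 1/2) ≤ ψ.repr u i) (h2 : ψ.repr u i < τ * ((k : ℝ) + 1/2)) :
    kfun ψ τ u i = k := by
  have hb := kfun_bounds ψ τ hτ u i
  have hlt1 : ((kfun ψ τ u i : ℝ)) < (k : ℝ) + 1 := by nlinarith [hb.1]
  have hlt2 : ((k : ℝ)) < (kfun ψ τ u i : ℝ) + 1 := by nlinarith [hb.2]
  have e1 : kfun ψ τ u i < k + 1 := by exact_mod_cast hlt1
  have e2 : k < kfun ψ τ u i + 1 := by exact_mod_cast hlt2
  omega

lemma cube0_convex (ψ : Module.Basis (Fin N) ℝ (Euc N)) (τ : ℝ) : Convex ℝ (cube0 ψ τ) := by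
  have he : cube0 ψ τ = ⋂ i, (ψ.coord i) ⁻¹' (Set.Icc (τ * (0 - 1/2)) (τ * (0 + 1/2))) := by
    ext u
    simp [cube0, cube, Module.Basis.coord_apply, Set.mem_iInter]
  rw [he]
  exact convex_iInter fun i => (convex_Icc _ _).linear_preimage _

lemma interior_strict (ψ : Module.Basis (Fin N) ℝ (Euc N)) (τ : ℝ) (hτ : 0 < τ) {u : Euc N}
    (hu : u ∈ interior (cube0 ψ τ)) (i : Fin N) :
    -(τ/2) < ψ.repr u i ∧ ψ.repr u i < τ/2 := by
  rw [mem_interior_iff_mem_nhds, Metric.mem_nhds_iff] at hu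
  obtain ⟨ε, hε, hball⟩ := hu
  set δ := ε / (2 * (‖ψ i‖ + 1)) with hδdef
  have hψ : (0:ℝ) ≤ ‖ψ i‖ := norm_nonneg _
  have hδpos : 0 < δ := by positivity
  have hmem : ∀ s : ℝ, |s| = 1 → u + (s * δ) • ψ i ∈ cube0 ψ τ := by
    intro s hs
    apply hball
    rw [Metric.mem_ball, dist_eq_norm]
    have he : u + (s * δ) • ψ i - u = (s * δ) • ψ i := by abel
    rw [he, norm_smul, Real.norm_eq_abs, abs_mul, hs, one_mul, abs_of_pos hδpos]
    have h1 : δ * ‖ψ i‖ ≤ δ * (‖ψ i‖ + 1) := by nlinarith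
    have h2 : δ * (‖ψ i‖ + 1) = ε / 2 := by
      rw [hδdef]
      field_simp
    linarith
  have hadd : ∀ c : ℝ, ψ.repr (u + c • ψ i) i = ψ.repr u i + c := by
    intro c
    simp [map_add, _root_.map_smul, Module.Basis.repr_self]
  have h1 := hmem 1 (by norm_num)
  have h2 := hmem (-1) (by norm_num)
  simp only [cube0, cube, Set.mem_setOf_eq, Pi.zero_apply, Int.cast_zero] at h1 h2
  have h1i := h1 i
  have h2i := h2 i
  rw [hadd] at h1i h2i
  constructor
  · nlinarith [h2i.1]
  · nlinarith [h1i.2]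

lemma repr_sub_grid (ψ : Module.Basis (Fin N) ℝ (Euc N)) (τ : ℝ) (u : Euc N) (k : Fin N → ℤ)
    (i : Fin N) :
    ψ.repr (u - ∑ j, (τ * (k j : ℝ)) • ψ j) i = ψ.repr u i - τ * k i := by
  have h : ψ.repr (u - ∑ j, (τ * (k j : ℝ)) • ψ j)
      = ψ.repr u - ψ.repr (∑ j, (τ * (k j : ℝ)) • ψ j) := map_sub _ _ _
  rw [h, Finsupp.sub_apply, repr_combo]

lemma kfun_sub_grid (ψ : Module.Basis (Fin N) ℝ (Euc N)) (τ : ℝ) (hτ : 0 < τ) (u : Euc N)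
    (k : Fin N → ℤ) (i : Fin N) :
    kfun ψ τ (u - ∑ j, (τ * (k j : ℝ)) • ψ j) i = kfun ψ τ u i - k i := by
  unfold kfun
  rw [repr_sub_grid]
  have h : (ψ.repr u i - τ * k i) / τ + 1/2 = (ψ.repr u i / τ + 1/2) - (k i : ℝ) := by
    field_simp
    ring
  rw [h, Int.floor_sub_intCast]

lemma gridpt_eq_iff (ψ : Module.Basis (Fin N) ℝ (Euc N)) (τ : ℝ) (hτ : 0 < τ) (u : Euc N)
    (k : Fin N → ℤ) :
    gridpt ψ τ u = ∑ i, (τ * (k i : ℝ)) • ψ i ↔ ∀ i, kfun ψ τ u i = k i := by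
  constructor
  · intro h i
    have h2 : ψ.repr (gridpt ψ τ u) i = ψ.repr (∑ i, (τ * (k i : ℝ)) • ψ i) i := by rw [h]
    unfold gridpt at h2
    rw [repr_combo, repr_combo] at h2
    have h3 : (kfun ψ τ u i : ℝ) = (k i : ℝ) := mul_left_cancel₀ hτ.ne' h2
    exact_mod_cast h3
  · intro h
    unfold gridpt
    exact Finset.sum_congr rfl fun i _ => by rw [h i]

lemma cellset_eq (ψ : Module.Basis (Fin N) ℝ (Euc N)) (τ : ℝ) (hτ : 0 < τ) (k : Fin N → ℤ) :
    {u : Euc N | gridpt ψ τ u = ∑ i, (τ * (k i : ℝ)) • ψ i}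
      = {u : Euc N | ∀ i, kfun ψ τ u i = k i} :=
  Set.ext fun u => gridpt_eq_iff ψ τ hτ u k

lemma cellK_preimage (ψ : Module.Basis (Fin N) ℝ (Euc N)) (τ : ℝ) (hτ : 0 < τ) (k : Fin N → ℤ) :
    {u : Euc N | ∀ i, kfun ψ τ u i = k i}
      = (fun u => u + -(∑ j, (τ * (k j : ℝ)) • ψ j)) ⁻¹' {u : Euc N | ∀ i, kfun ψ τ u i = 0} := by
  ext u
  simp only [Set.mem_preimage, Set.mem_setOf_eq, ← sub_eq_add_neg]
  constructor
  · intro h i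
    rw [kfun_sub_grid ψ τ hτ, h i, sub_self]
  · intro h i
    have := h i
    rw [kfun_sub_grid ψ τ hτ] at this
    omega

lemma cell0_subset_cube0 (ψ : Module.Basis (Fin N) ℝ (Euc N)) (τ : ℝ) (hτ : 0 < τ) :
    {u : Euc N | ∀ i, kfun ψ τ u i = 0} ⊆ cube0 ψ τ := by
  intro u hu
  simp only [cube0, cube, Set.mem_setOf_eq, Pi.zero_apply, Int.cast_zero]
  intro i
  have hb := kfun_bounds ψ τ hτ u i
  rw [hu i] at hb
  simp only [Int.cast_zero] at hb
  constructor
  · linarith [hb.1]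
  · linarith [hb.2]

lemma cell0_measurable (ψ : Module.Basis (Fin N) ℝ (Euc N)) (τ : ℝ) (hτ : 0 < τ) :
    MeasurableSet {u : Euc N | ∀ i, kfun ψ τ u i = 0} := by
  have he : {u : Euc N | ∀ i, kfun ψ τ u i = 0}
      = ⋂ i, (fun u : Euc N => ψ.repr u i) ⁻¹'
          Set.Ico (τ * ((0:ℝ) - 1/2)) (τ * ((0:ℝ) + 1/2)) := by
    ext u
    simp only [Set.mem_iInter, Set.mem_preimage, Set.mem_Ico, Set.mem_setOf_eq]
    constructor
    · intro h i
      have hb := kfun_bounds ψ τ hτ u i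
      rw [h i] at hb
      simpa using hb
    · intro h i
      exact kfun_eq ψ τ hτ (k := 0) (by simpa using (h i).1) (by simpa using (h i).2)
  rw [he]
  exact MeasurableSet.iInter fun i => measurableSet_Ico.preimage (reprCont ψ i).measurable

lemma vol_cell0_eq (ψ : Module.Basis (Fin N) ℝ (Euc N)) (τ : ℝ) (hτ : 0 < τ) :
    volume {u : Euc N | ∀ i, kfun ψ τ u i = 0} = volume (cube0 ψ τ) := by
  apply le_antisymm (measure_mono (cell0_subset_cube0 ψ τ hτ))
  have hdiff : cube0 ψ τ \ {u : Euc N | ∀ i, kfun ψ τ u i = 0} ⊆ frontier (cube0 ψ τ) := by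
    rintro u ⟨hu, hnot⟩
    show u ∈ closure (cube0 ψ τ) \ interior (cube0 ψ τ)
    refine ⟨subset_closure hu, fun hint => hnot ?_⟩
    intro i
    have hs := interior_strict ψ τ hτ hint i
    exact kfun_eq ψ τ hτ (k := 0) (by push_cast; linarith [hs.1]) (by push_cast; linarith [hs.2])
  have h0 : volume (cube0 ψ τ \ {u : Euc N | ∀ i, kfun ψ τ u i = 0}) = 0 :=
    measure_mono_null hdiff (Convex.addHaar_frontier volume (cube0_convex ψ τ))
  calc volume (cube0 ψ τ)
      ≤ volume (cube0 ψ τ ∩ {u : Euc N | ∀ i, kfun ψ τ u i = 0})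
        + volume (cube0 ψ τ \ {u : Euc N | ∀ i, kfun ψ τ u i = 0}) :=
        measure_le_inter_add_diff _ _ _
    _ ≤ volume {u : Euc N | ∀ i, kfun ψ τ u i = 0} + 0 :=
        add_le_add (measure_mono Set.inter_subset_right) h0.le
    _ = volume {u : Euc N | ∀ i, kfun ψ τ u i = 0} := add_zero _

lemma vol_cellK (ψ : Module.Basis (Fin N) ℝ (Euc N)) (τ : ℝ) (hτ : 0 < τ) (k : Fin N → ℤ) :
    volume {u : Euc N | ∀ i, kfun ψ τ u i = k i} = volume (cube0 ψ τ) := by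
  rw [cellK_preimage ψ τ hτ k, measure_preimage_add_right, vol_cell0_eq ψ τ hτ]

lemma cellK_measurable (ψ : Module.Basis (Fin N) ℝ (Euc N)) (τ : ℝ) (hτ : 0 < τ) (k : Fin N → ℤ) :
    MeasurableSet {u : Euc N | ∀ i, kfun ψ τ u i = k i} := by
  rw [cellK_preimage ψ τ hτ k]
  exact (cell0_measurable ψ τ hτ).preimage (measurable_add_const _)

lemma grid_inter_finite (hN : 1 ≤ N) (ψ : Module.Basis (Fin N) ℝ (Euc N)) (τ : ℝ) (hτ : 0 < τ)
    (hfd : IsNormLike fd) (R : ℝ) :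
    {x : Euc N | x ∈ Dgrid ψ τ ∧ fd x ≤ R}.Finite := by
  classical
  haveI : Nontrivial (Euc N) := nontrivial_of_ne (ψ ⟨0, hN⟩) 0 (ψ.ne_zero _)
  obtain ⟨u₀, hu₀s, hu₀min⟩ := (isCompact_sphere (0 : Euc N) 1).exists_isMinOn
    (NormedSpace.sphere_nonempty.mpr zero_le_one) (fd_cont ψ hfd).continuousOn
  set c := fd u₀ with hc
  have hcpos : 0 < c := by
    rcases (hfd.nonneg u₀).lt_or_eq with h | h
    · exact h
    · exfalso
      have h0 : u₀ = 0 := (hfd.eq_zero_iff u₀).mp h.symm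
      rw [h0] at hu₀s
      simp at hu₀s
  have hlow : ∀ x : Euc N, c * ‖x‖ ≤ fd x := by
    intro x
    rcases eq_or_ne x 0 with rfl | hx
    · simp [hfd.zero]
    · have hxs : ‖x‖⁻¹ • x ∈ Metric.sphere (0 : Euc N) 1 := by
        simp [norm_smul, abs_of_nonneg, inv_mul_cancel₀ (norm_ne_zero_iff.mpr hx)]
      have h1 : c ≤ fd (‖x‖⁻¹ • x) := isMinOn_iff.mp hu₀min _ hxs
      have h2 : fd x = ‖x‖ * fd (‖x‖⁻¹ • x) := by
        have hs : (‖x‖ : ℝ) • (‖x‖⁻¹ • x) = x := by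
          rw [smul_smul, mul_inv_cancel₀ (norm_ne_zero_iff.mpr hx), one_smul]
        conv_lhs => rw [← hs]
        rw [hfd.smul_eq, abs_of_nonneg (norm_nonneg x)]
      nlinarith [norm_nonneg x]
  set B := max R 0 / c with hB
  have hB0 : (0:ℝ) ≤ B := div_nonneg (le_max_right _ _) hcpos.le
  have hnorm : ∀ x : Euc N, x ∈ Dgrid ψ τ ∧ fd x ≤ R → ‖x‖ ≤ B := by
    rintro x ⟨-, hx⟩
    have h1 := hlow x
    have h2 : c * ‖x‖ ≤ max R 0 := le_trans h1 (le_trans hx (le_max_left _ _))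
    rw [hB, le_div_iff₀ hcpos]
    nlinarith
  set φ : Fin N → Euc N →L[ℝ] ℝ :=
    fun i => LinearMap.toContinuousLinearMap (ψ.coord i) with hφ
  set m : ℤ := ⌈(∑ j, ‖φ j‖) * B / τ⌉ with hm
  have hfin : ({k : Fin N → ℤ | ∀ i, k i ∈ Set.Icc (-m) m}).Finite := by
    have he : {k : Fin N → ℤ | ∀ i, k i ∈ Set.Icc (-m) m}
        = Set.pi Set.univ (fun _ : Fin N => Set.Icc (-m) m) := by
      ext k
      simp only [Set.mem_setOf_eq, Set.mem_pi, Set.mem_univ, true_implies]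
    rw [he]
    exact Set.Finite.pi fun _ => Set.finite_Icc _ _
  apply (hfin.image (fun k : Fin N → ℤ => ∑ i, (τ * (k i : ℝ)) • ψ i)).subset
  rintro x ⟨⟨k, rfl⟩, hfdx⟩
  refine Set.mem_image_of_mem _ ?_
  intro i
  have hxnorm : ‖∑ j, (τ * (k j : ℝ)) • ψ j‖ ≤ B := hnorm _ ⟨⟨k, rfl⟩, hfdx⟩
  have h1 : |τ * (k i : ℝ)| ≤ ‖φ i‖ * B := by
    have h2 := (φ i).le_opNorm (∑ j, (τ * (k j : ℝ)) • ψ j)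
    have hval : φ i (∑ j, (τ * (k j : ℝ)) • ψ j) = τ * k i := by
      have h9 : φ i (∑ j, (τ * (k j : ℝ)) • ψ j)
          = ψ.repr (∑ j, (τ * (k j : ℝ)) • ψ j) i := by
        simp only [hφ, LinearMap.coe_toContinuousLinearMap', Module.Basis.coord_apply]
      rw [h9, repr_combo]
    rw [hval, Real.norm_eq_abs] at h2
    calc |τ * (k i : ℝ)| ≤ ‖φ i‖ * ‖∑ j, (τ * (k j : ℝ)) • ψ j‖ := h2
      _ ≤ ‖φ i‖ * B := mul_le_mul_of_nonneg_left hxnorm (norm_nonneg _)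
  have h3 : ‖φ i‖ * B ≤ (∑ j, ‖φ j‖) * B :=
    mul_le_mul_of_nonneg_right
      (Finset.single_le_sum (fun j _ => norm_nonneg (φ j)) (Finset.mem_univ i)) hB0
  have h4 : |(k i : ℝ)| ≤ (∑ j, ‖φ j‖) * B / τ := by
    rw [le_div_iff₀ hτ]
    have habs : |τ * (k i : ℝ)| = |(k i : ℝ)| * τ := by
      rw [abs_mul, abs_of_pos hτ, mul_comm]
    linarith [h1, h3]
  have h5 : |(k i : ℝ)| ≤ (m : ℝ) := le_trans h4 (Int.le_ceil _)
  have h6 : |k i| ≤ m := by exact_mod_cast h5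
  exact Set.mem_Icc.mpr (abs_le.mp h6)

end AuxStmt17


/-- sandwich for the probability of coding with exactly `K` coefficients,
for `U` uniform on the `f_d`-ball of radius `τ'`, in terms of counts of grid points in
`SSAT(Cl_K,(0,∞))` intersected with the balls of radii `τ' ± Mτ`. -/
theorem stmt17 {N : ℕ} (hN : 1 ≤ N) (ψ : Module.Basis (Fin N) ℝ (Euc N)) (τ : ℝ) (hτ : 0 < τ)
    (f : Euc N → ℝ) (hf : GoodNorm f) (fd : Euc N → ℝ) (hfd : IsNormLike fd)
    (sol : Euc N → Euc N) (hsol : IsSol ψ τ f sol)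
    (τ' : ℝ) (hτ' : 0 < τ') (K : ℕ) (hK1 : 1 ≤ K) (hKN : K ≤ N)
    (M : ℝ) (hM : M = sSup (fd '' {v : Euc N | ∀ i, |ψ.repr v i| ≤ 1 / 2})) :
    volume {u : Euc N | fd u ≤ τ' ∧ (Jtil ψ τ sol u).ncard = K} /
        volume {u : Euc N | fd u ≤ τ'} ≤
      (volume (cube0 ψ τ) / volume {u : Euc N | fd u ≤ τ'}) *
        ((SSAT sol fd (ClKset ψ τ K) (Set.Ioi 0) ∩ {u | fd u ≤ τ' + M * τ} ∩
          Dgrid ψ τ).ncard : ENNReal) ∧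
    (volume (cube0 ψ τ) / volume {u : Euc N | fd u ≤ τ'}) *
        ((SSAT sol fd (ClKset ψ τ K) (Set.Ioi 0) ∩ {u | fd u ≤ τ' - M * τ} ∩
          Dgrid ψ τ).ncard : ENNReal) ≤
      volume {u : Euc N | fd u ≤ τ' ∧ (Jtil ψ τ sol u).ncard = K} /
        volume {u : Euc N | fd u ≤ τ'} := by
  classical
  set V := volume {u : Euc N | fd u ≤ τ'} with hV
  set Aset := {u : Euc N | fd u ≤ τ' ∧ (Jtil ψ τ sol u).ncard = K} with hA
  set Splus := SSAT sol fd (ClKset ψ τ K) (Set.Ioi 0) ∩ {u : Euc N | fd u ≤ τ' + M * τ} ∩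
      Dgrid ψ τ with hSp
  set Sminus := SSAT sol fd (ClKset ψ τ K) (Set.Ioi 0) ∩ {u : Euc N | fd u ≤ τ' - M * τ} ∩
      Dgrid ψ τ with hSm
  -- basic facts about f
  have hf0 : f 0 = 0 := by have := hf.smul_eq 0 0; simpa using this
  have hfnn : ∀ x, 0 ≤ f x := by
    intro x
    have h1 := hf.add_le x (-x)
    have h2 := hf.smul_eq (-1) x
    simp only [neg_smul, one_smul, abs_neg, abs_one, one_mul] at h2
    rw [add_neg_cancel, hf0] at h1
    linarith
  have h0cube : (0 : Euc N) ∈ cube0 ψ τ := by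
    simp only [cube0, cube, Set.mem_setOf_eq, Pi.zero_apply, Int.cast_zero, map_zero,
      Finsupp.coe_zero]
    intro i
    constructor <;> nlinarith
  have hsol0 : sol 0 = 0 := by
    obtain ⟨hmem, hmin⟩ := hsol 0
    have h1 : f (sol 0 - 0) ≤ f ((0 : Euc N) - 0) := isMinOn_iff.mp hmin 0 h0cube
    rw [sub_zero, sub_self, hf0] at h1
    exact (hf.eq_zero_iff _).mp (le_antisymm h1 (hfnn _))
  have hJ0 : Jset ψ τ (0 : Euc N) = ∅ := by
    ext i
    simp only [Jset, Set.mem_setOf_eq, Set.mem_empty_iff_false, iff_false]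
    intro h
    have hr : ψ.repr (0 : Euc N) i = 0 := by simp
    rw [hr] at h
    rcases h with h | h <;> linarith
  -- the M bound
  have hMle : ∀ v : Euc N, (∀ i, |ψ.repr v i| ≤ 1 / 2) → fd v ≤ M := by
    intro v hv
    rw [hM]
    have hcl : IsClosed {v : Euc N | ∀ i, |ψ.repr v i| ≤ 1 / 2} := by
      have he : {v : Euc N | ∀ i, |ψ.repr v i| ≤ 1 / 2}
          = ⋂ i, (fun v : Euc N => |ψ.repr v i|) ⁻¹' Set.Iic (1 / 2) := by
        ext w
        simp [Set.mem_iInter]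
      rw [he]
      exact isClosed_iInter fun i =>
        IsClosed.preimage (continuous_abs.comp (reprCont ψ i)) isClosed_Iic
    have hbd : Bornology.IsBounded {v : Euc N | ∀ i, |ψ.repr v i| ≤ 1 / 2} := by
      apply Bornology.IsBounded.subset
        (Metric.isBounded_closedBall (x := (0 : Euc N)) (r := ∑ j, (1 / 2) * ‖ψ j‖))
      intro w hw
      rw [Metric.mem_closedBall, dist_zero_right]
      calc ‖w‖ = ‖∑ j, ψ.repr w j • ψ j‖ := by rw [ψ.sum_repr]
        _ ≤ ∑ j, ‖ψ.repr w j • ψ j‖ := norm_sum_le _ _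
        _ ≤ ∑ j, (1 / 2) * ‖ψ j‖ := Finset.sum_le_sum fun j _ => by
            rw [norm_smul, Real.norm_eq_abs]
            exact mul_le_mul_of_nonneg_right (hw j) (norm_nonneg _)
    have hcomp : IsCompact {v : Euc N | ∀ i, |ψ.repr v i| ≤ 1 / 2} :=
      Metric.isCompact_of_isClosed_isBounded hcl hbd
    exact le_csSup (hcomp.image (fd_cont ψ hfd)).bddAbove (Set.mem_image_of_mem fd hv)
  -- distance from a point to its grid point
  have hgd : ∀ u : Euc N, fd (u - gridpt ψ τ u) ≤ M * τ := by
    intro u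
    have hτi : (0:ℝ) < τ⁻¹ := inv_pos.mpr hτ
    have hvc : ∀ i, |ψ.repr (τ⁻¹ • (u - gridpt ψ τ u)) i| ≤ 1 / 2 := by
      intro i
      have hb := kfun_bounds ψ τ hτ u i
      have hre : ψ.repr (u - gridpt ψ τ u) i = ψ.repr u i - τ * kfun ψ τ u i := by
        have h := repr_sub_grid ψ τ u (kfun ψ τ u) i
        simpa [gridpt] using h
      have hsm : ψ.repr (τ⁻¹ • (u - gridpt ψ τ u)) i
          = τ⁻¹ * (ψ.repr u i - τ * kfun ψ τ u i) := by
        rw [_root_.map_smul, Finsupp.smul_apply, hre, smul_eq_mul]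
      have hl1 : -(τ/2) ≤ ψ.repr u i - τ * kfun ψ τ u i := by linarith [hb.1]
      have hl2 : ψ.repr u i - τ * kfun ψ τ u i ≤ τ/2 := by linarith [hb.2]
      have e1 : τ⁻¹ * (-(τ/2)) = -(1/2) := by field_simp
      have e2 : τ⁻¹ * (τ/2) = 1/2 := by field_simp
      rw [hsm, abs_le]
      constructor
      · calc -(1/2 : ℝ) = τ⁻¹ * (-(τ/2)) := e1.symm
          _ ≤ τ⁻¹ * (ψ.repr u i - τ * kfun ψ τ u i) := mul_le_mul_of_nonneg_left hl1 hτi.le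
      · calc τ⁻¹ * (ψ.repr u i - τ * kfun ψ τ u i) ≤ τ⁻¹ * (τ/2) :=
            mul_le_mul_of_nonneg_left hl2 hτi.le
          _ = 1/2 := e2
    have heq : u - gridpt ψ τ u = τ • (τ⁻¹ • (u - gridpt ψ τ u)) := by
      rw [smul_smul, mul_inv_cancel₀ hτ.ne', one_smul]
    rw [heq, hfd.smul_eq, abs_of_pos hτ]
    have hle := hMle _ hvc
    nlinarith
  -- finiteness
  have hfinp : Splus.Finite := (grid_inter_finite hN ψ τ hτ hfd (τ' + M * τ)).subset (by
    rintro x ⟨⟨hss, hball⟩, hd⟩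
    exact ⟨hd, hball⟩)
  have hfinm : Sminus.Finite := (grid_inter_finite hN ψ τ hτ hfd (τ' - M * τ)).subset (by
    rintro x ⟨⟨hss, hball⟩, hd⟩
    exact ⟨hd, hball⟩)
  -- every point of Aset has its grid point in Splus
  have hg_mem : ∀ u ∈ Aset, gridpt ψ τ u ∈ Splus := by
    intro u hu
    simp only [hA, Set.mem_setOf_eq] at hu
    obtain ⟨hfu, hJu⟩ := hu
    have hDg : gridpt ψ τ u ∈ Dgrid ψ τ := ⟨kfun ψ τ u, rfl⟩
    have hfg : fd (gridpt ψ τ u) ≤ τ' + M * τ := by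
      have h1 := hfd.sub_le (gridpt ψ τ u) u
      have h2 : fd (gridpt ψ τ u - u) ≤ M * τ := by
        rw [show gridpt ψ τ u - u = -(u - gridpt ψ τ u) by abel, hfd.neg]
        exact hgd u
      linarith
    have hKJ : (Jset ψ τ (sol (gridpt ψ τ u))).ncard = K := hJu
    have hsolg := hsol (gridpt ψ τ u)
    have hnint : sol (gridpt ψ τ u) ∉ interior (cube0 ψ τ) := by
      intro hint
      obtain ⟨j, hj⟩ := Set.nonempty_of_ncard_ne_zero
        (s := Jset ψ τ (sol (gridpt ψ τ u))) (by omega)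
      have hs := interior_strict ψ τ hτ hint j
      simp only [Jset, Set.mem_setOf_eq] at hj
      rcases hj with h | h
      · linarith [hs.2]
      · linarith [hs.1]
    have hfront : sol (gridpt ψ τ u) ∈ frontier (cube0 ψ τ) := by
      show sol (gridpt ψ τ u) ∈ closure (cube0 ψ τ) \ interior (cube0 ψ τ)
      exact ⟨subset_closure hsolg.1, hnint⟩
    have hne : fd (gridpt ψ τ u - sol (gridpt ψ τ u)) ≠ 0 := by
      intro h0
      have hgs : gridpt ψ τ u = sol (gridpt ψ τ u) :=
        sub_eq_zero.mp ((hfd.eq_zero_iff _).mp h0)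
      have hgc : gridpt ψ τ u ∈ cube0 ψ τ := hgs ▸ hsolg.1
      simp only [cube0, cube, Set.mem_setOf_eq, Pi.zero_apply, Int.cast_zero] at hgc
      have hk0 : ∀ i, kfun ψ τ u i = 0 := by
        intro i
        have hri : ψ.repr (gridpt ψ τ u) i = τ * kfun ψ τ u i := by
          unfold gridpt
          exact repr_combo ψ _ i
        have hgi := hgc i
        rw [hri] at hgi
        have h7 : |(kfun ψ τ u i : ℝ)| < 1 := by
          rw [abs_lt]
          constructor <;> nlinarith [hgi.1, hgi.2]
        have h8a : (-1 : ℤ) < kfun ψ τ u i := by exact_mod_cast (abs_lt.mp h7).1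
        have h8b : kfun ψ τ u i < 1 := by exact_mod_cast (abs_lt.mp h7).2
        omega
      have hg0 : gridpt ψ τ u = 0 := by
        unfold gridpt
        apply Finset.sum_eq_zero
        intro i _
        rw [hk0 i]
        simp
      have hJe : Jset ψ τ (sol (gridpt ψ τ u)) = ∅ := by
        rw [← hgs, hg0, hJ0]
      rw [hJe, Set.ncard_empty] at hKJ
      omega
    have hpos : fd (gridpt ψ τ u - sol (gridpt ψ τ u)) ∈ Set.Ioi (0:ℝ) :=
      Set.mem_Ioi.mpr (lt_of_le_of_ne (hfd.nonneg _) (Ne.symm hne))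
    have hClK : sol (gridpt ψ τ u) ∈ ClKset ψ τ K := by
      simp only [ClKset, Set.mem_setOf_eq]
      exact ⟨hfront, hKJ⟩
    have hSSAT : gridpt ψ τ u ∈ SSAT sol fd (ClKset ψ τ K) (Set.Ioi 0) := by
      simp only [SSAT, Set.mem_setOf_eq]
      exact ⟨hClK, hpos⟩
    exact ⟨⟨hSSAT, hfg⟩, hDg⟩
  -- cells over Sminus are inside Aset
  have hcell_sub : ∀ g ∈ Sminus, {u : Euc N | gridpt ψ τ u = g} ⊆ Aset := by
    rintro g ⟨⟨hss, hball⟩, hDg⟩ u hu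
    simp only [SSAT, Set.mem_setOf_eq] at hss
    have hgu : gridpt ψ τ u = g := hu
    simp only [hA, Set.mem_setOf_eq]
    constructor
    · have h1 := hfd.sub_le u g
      have h2 : fd (u - g) ≤ M * τ := by
        rw [← hgu]
        exact hgd u
      have h3 : fd g ≤ τ' - M * τ := hball
      linarith
    · show (Jset ψ τ (sol (gridpt ψ τ u))).ncard = K
      rw [hgu]
      have h := hss.1
      simp only [ClKset, Set.mem_setOf_eq] at h
      exact h.2
  -- volumes of cells
  have hvol_cell : ∀ g ∈ Dgrid ψ τ,
      volume {u : Euc N | gridpt ψ τ u = g} = volume (cube0 ψ τ) := by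
    rintro g ⟨k, rfl⟩
    rw [cellset_eq ψ τ hτ k]
    exact vol_cellK ψ τ hτ k
  have hmeas_cell : ∀ g ∈ Dgrid ψ τ, MeasurableSet {u : Euc N | gridpt ψ τ u = g} := by
    rintro g ⟨k, rfl⟩
    rw [cellset_eq ψ τ hτ k]
    exact cellK_measurable ψ τ hτ k
  -- upper bound
  have hupper : volume Aset ≤ volume (cube0 ψ τ) * (Splus.ncard : ENNReal) := by
    have hsub : Aset ⊆ ⋃ g ∈ hfinp.toFinset, {u : Euc N | gridpt ψ τ u = g} := by
      intro u hu
      exact Set.mem_biUnion (hfinp.mem_toFinset.mpr (hg_mem u hu)) rfl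
    calc volume Aset
        ≤ volume (⋃ g ∈ hfinp.toFinset, {u : Euc N | gridpt ψ τ u = g}) := measure_mono hsub
      _ ≤ ∑ g ∈ hfinp.toFinset, volume {u : Euc N | gridpt ψ τ u = g} :=
          measure_biUnion_finset_le _ _
      _ ≤ ∑ g ∈ hfinp.toFinset, volume (cube0 ψ τ) := by
          apply Finset.sum_le_sum
          intro g hg
          rw [hvol_cell g (hfinp.mem_toFinset.mp hg).2]
      _ = hfinp.toFinset.card • volume (cube0 ψ τ) := Finset.sum_const _
      _ = volume (cube0 ψ τ) * (Splus.ncard : ENNReal) := by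
          rw [nsmul_eq_mul, Set.ncard_eq_toFinset_card _ hfinp, mul_comm]
  -- lower bound
  have hlower : volume (cube0 ψ τ) * (Sminus.ncard : ENNReal) ≤ volume Aset := by
    have hdisj : (hfinm.toFinset : Set (Euc N)).PairwiseDisjoint
        (fun g => {u : Euc N | gridpt ψ τ u = g}) := by
      intro g₁ _ g₂ _ hne
      apply Set.disjoint_left.mpr
      intro u h1 h2
      have e1 : gridpt ψ τ u = g₁ := h1
      have e2 : gridpt ψ τ u = g₂ := h2
      exact hne (e1.symm.trans e2)
    have heq : volume (⋃ g ∈ hfinm.toFinset, {u : Euc N | gridpt ψ τ u = g})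
        = ∑ g ∈ hfinm.toFinset, volume {u : Euc N | gridpt ψ τ u = g} :=
      measure_biUnion_finset hdisj fun g hg => hmeas_cell g (hfinm.mem_toFinset.mp hg).2
    have hsum : ∑ g ∈ hfinm.toFinset, volume {u : Euc N | gridpt ψ τ u = g}
        = volume (cube0 ψ τ) * (Sminus.ncard : ENNReal) := by
      have h1 : ∑ g ∈ hfinm.toFinset, volume {u : Euc N | gridpt ψ τ u = g}
          = ∑ _g ∈ hfinm.toFinset, volume (cube0 ψ τ) :=
        Finset.sum_congr rfl fun g hg => hvol_cell g (hfinm.mem_toFinset.mp hg).2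
      rw [h1, Finset.sum_const, nsmul_eq_mul, Set.ncard_eq_toFinset_card _ hfinm, mul_comm]
    calc volume (cube0 ψ τ) * (Sminus.ncard : ENNReal)
        = volume (⋃ g ∈ hfinm.toFinset, {u : Euc N | gridpt ψ τ u = g}) := by
          rw [heq, hsum]
      _ ≤ volume Aset :=
          measure_mono (Set.iUnion₂_subset fun g hg => hcell_sub g (hfinm.mem_toFinset.mp hg))
  -- conclude
  have hdivp : volume (cube0 ψ τ) / V * (Splus.ncard : ENNReal)
      = volume (cube0 ψ τ) * (Splus.ncard : ENNReal) / V := by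
    rw [div_eq_mul_inv, div_eq_mul_inv, mul_right_comm]
  have hdivm : volume (cube0 ψ τ) / V * (Sminus.ncard : ENNReal)
      = volume (cube0 ψ τ) * (Sminus.ncard : ENNReal) / V := by
    rw [div_eq_mul_inv, div_eq_mul_inv, mul_right_comm]
  constructor
  · rw [hdivp]
    exact ENNReal.div_le_div_right hupper V
  · rw [hdivm]
    exact ENNReal.div_le_div_right hlower V
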